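/- Let (F_n) be a sequence of cumulative distribution functions on ℝ converging pointwise to a continuous cumulative distribution function F. Then F_n converges to F uniformly on ℝ (Pólya's lemma). -/

import Mathlib

open Filter

private lemma cdf_nonneg {f : ℝ → ℝ} (hm : Monotone f) (hb : Tendsto f atBot (nhds 0))
    (x : ℝ) : 0 ≤ f x :=
  le_of_tendsto hb (eventually_atBot.mpr ⟨x, fun _ hy => hm hy⟩)

private lemma cdf_le_one {f : ℝ → ℝ} (hm : Monotone f) (ht : Tendsto f atTop (nhds 1))
    (x : ℝ) : f x ≤ 1 :=
  ge_of_tendsto ht (eventually_atTop.mpr ⟨x, fun _ hy => hm hy⟩)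

private lemma cdf_surj {G : ℝ → ℝ} (hGmono : Monotone G) (hGcont : Continuous G)
    (hGbot : Tendsto G atBot (nhds 0)) (hGtop : Tendsto G atTop (nhds 1))
    {t : ℝ} (h0 : 0 < t) (h1 : t < 1) : ∃ y, G y = t := by
  obtain ⟨a, ha⟩ : ∃ a, G a < t := by
    have := hGbot.eventually (eventually_lt_nhds h0)
    obtain ⟨a, ha⟩ := this.exists
    exact ⟨a, ha⟩
  obtain ⟨b, hb⟩ : ∃ b, t < G b := by
    have := hGtop.eventually (eventually_gt_nhds h1)
    obtain ⟨b, hb⟩ := this.exists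
    exact ⟨b, hb⟩
  have hab : a ≤ b := by
    by_contra h
    exact absurd (hGmono (le_of_not_ge h)) (not_le.mpr (ha.trans hb))
  have := intermediate_value_Icc hab hGcont.continuousOn
  obtain ⟨y, _, hy⟩ := this ⟨ha.le, hb.le⟩
  exact ⟨y, hy⟩

/-- Pólya's lemma: a sequence of cumulative distribution functions converging pointwise
to a continuous cumulative distribution function converges uniformly on `ℝ`. -/
theorem polya_lemma (F : ℕ → ℝ → ℝ) (G : ℝ → ℝ)
    (hmono : ∀ n, Monotone (F n))
    (hrc : ∀ n x, ContinuousWithinAt (F n) (Set.Ici x) x)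
    (hbot : ∀ n, Tendsto (F n) atBot (nhds 0))
    (htop : ∀ n, Tendsto (F n) atTop (nhds 1))
    (hGmono : Monotone G)
    (hGcont : Continuous G)
    (hGbot : Tendsto G atBot (nhds 0))
    (hGtop : Tendsto G atTop (nhds 1))
    (hpt : ∀ x, Tendsto (fun n => F n x) atTop (nhds (G x))) :
    TendstoUniformly F G atTop := by
  rw [Metric.tendstoUniformly_iff]
  intro ε hε
  -- choose k with 2 ≤ k and 1/k < ε/2
  obtain ⟨m, hm⟩ := exists_nat_gt (2 / ε)
  set k : ℕ := m + 2 with hk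
  have hk2 : 2 ≤ k := by omega
  have hkpos : (0:ℝ) < (k:ℝ) := by positivity
  have hkε : 1 / (k:ℝ) < ε / 2 := by
    rw [div_lt_div_iff₀ hkpos (by norm_num)]
    have : 2 / ε < (k:ℝ) := by
      refine hm.trans_le ?_
      exact_mod_cast Nat.le_add_right m 2
    rw [div_lt_iff₀ hε] at this
    linarith
  -- choose grid points p i with G (p i) = (2i+1)/(2k), for i < k
  have hgrid : ∀ i : ℕ, ∃ y : ℝ, i < k → G y = (2 * (i:ℝ) + 1) / (2 * k) := by
    intro i
    by_cases hi : i < k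
    · have h0 : (0:ℝ) < (2 * (i:ℝ) + 1) / (2 * k) := by positivity
      have h1 : (2 * (i:ℝ) + 1) / (2 * k) < 1 := by
        rw [div_lt_one (by positivity)]
        have : (i:ℝ) + 1 ≤ (k:ℝ) := by exact_mod_cast hi
        linarith
      obtain ⟨y, hy⟩ := cdf_surj hGmono hGcont hGbot hGtop h0 h1
      exact ⟨y, fun _ => hy⟩
    · exact ⟨0, fun h => absurd h hi⟩
  choose p hp using hgrid
  -- eventually F n is ε/2-close to G at all grid points
  have hev : ∀ᶠ n in atTop, ∀ i ∈ Finset.range k, |F n (p i) - G (p i)| < ε / 2 := by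
    rw [Filter.eventually_all_finset]
    intro i _
    have := (hpt (p i)).eventually (eventually_abs_sub_lt (G (p i)) (half_pos hε))
    exact this
  filter_upwards [hev] with n hn
  intro x
  have hF0 : ∀ y, 0 ≤ F n y := cdf_nonneg (hmono n) (hbot n)
  have hF1 : ∀ y, F n y ≤ 1 := cdf_le_one (hmono n) (htop n)
  have hG0 : ∀ y, 0 ≤ G y := cdf_nonneg hGmono hGbot
  have hG1 : ∀ y, G y ≤ 1 := cdf_le_one hGmono hGtop
  have hval : ∀ i, i < k → G (p i) = (2 * (i:ℝ) + 1) / (2 * k) := hp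
  have hclose : ∀ i, i < k → |F n (p i) - G (p i)| < ε / 2 := fun i hi =>
    hn i (Finset.mem_range.mpr hi)
  rw [Real.dist_eq]
  rw [abs_sub_lt_iff]
  -- key bound in both directions
  by_cases hx0 : x < p 0
  · -- far left
    have h0k : 0 < k := by omega
    have hG0x : G x ≤ G (p 0) := hGmono hx0.le
    have hGp0 : G (p 0) = 1 / (2 * k) := by
      rw [hval 0 h0k]; norm_num
    have hFp0 : F n (p 0) < G (p 0) + ε / 2 := by
      have := (abs_sub_lt_iff.mp (hclose 0 h0k)).1; linarith
    have hFx : F n x ≤ F n (p 0) := hmono n hx0.le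
    constructor
    · -- G x - F n x < ε
      have : G x ≤ 1 / (2 * k) := hGp0 ▸ hG0x
      have h2k : 1 / (2 * (k:ℝ)) ≤ 1 / k := by
        apply one_div_le_one_div_of_le hkpos; linarith
      have := hF0 x
      linarith
    · -- F n x - G x < ε
      have h2k : 1 / (2 * (k:ℝ)) ≤ 1 / k := by
        apply one_div_le_one_div_of_le hkpos; linarith
      have := hG0 x
      linarith [hGp0 ▸ hFp0]
  · by_cases hxk : p (k - 1) ≤ x
    · -- far right
      have hk1 : k - 1 < k := by omega
      have hGkx : G (p (k-1)) ≤ G x := hGmono hxk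
      have hGpk : G (p (k-1)) = 1 - 1 / (2 * k) := by
        rw [hval (k-1) hk1]
        have : ((k - 1 : ℕ) : ℝ) = (k:ℝ) - 1 := by
          have : (1:ℕ) ≤ k := by omega
          push_cast [Nat.cast_sub this]; ring
        rw [this]
        field_simp
        ring
      have hFpk : G (p (k-1)) - ε / 2 < F n (p (k-1)) := by
        have := (abs_sub_lt_iff.mp (hclose (k-1) hk1)).2; linarith
      have hFx : F n (p (k-1)) ≤ F n x := hmono n hxk
      have h2k : 1 / (2 * (k:ℝ)) ≤ 1 / k := by
        apply one_div_le_one_div_of_le hkpos; linarith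
      constructor
      · -- G x - F n x < ε
        have := hG1 x
        linarith [hGpk ▸ hFpk]
      · -- F n x - G x < ε
        have := hF1 x
        linarith [hGpk ▸ hGkx]
    · -- middle: find i with p i ≤ x < p (i+1), i+1 ≤ k-1
      push_neg at hx0 hxk
      set P : ℕ → Prop := fun j => p j ≤ x with hP
      have hPdec : DecidablePred P := fun j => Classical.dec _
      set i : ℕ := Nat.findGreatest P (k - 2) with hi
      have hpi : p i ≤ x := Nat.findGreatest_spec (P := P) (Nat.zero_le _) hx0
      have hile : i ≤ k - 2 := Nat.findGreatest_le _
      have hxi1 : x < p (i + 1) := by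
        by_cases h : i + 1 ≤ k - 2
        · have := Nat.findGreatest_is_greatest (P := P) (Nat.lt_succ_self i) h
          exact lt_of_not_ge this
        · have : i = k - 2 := by omega
          have : i + 1 = k - 1 := by omega
          rw [this]; exact hxk
      have hi1k : i + 1 < k := by omega
      have hik : i < k := by omega
      -- grid values
      have hGi := hval i hik
      have hGi1 := hval (i+1) hi1k
      have hdiff : G (p (i+1)) - G (p i) = 1 / k := by
        have hkne : (k:ℝ) ≠ 0 := hkpos.ne'
        rw [hGi, hGi1]
        push_cast
        field_simp
        ring
      have hGxl : G (p i) ≤ G x := hGmono hpi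
      have hGxu : G x ≤ G (p (i+1)) := hGmono hxi1.le
      have hFxl : F n (p i) ≤ F n x := hmono n hpi
      have hFxu : F n x ≤ F n (p (i+1)) := hmono n hxi1.le
      have hci := abs_sub_lt_iff.mp (hclose i hik)
      have hci1 := abs_sub_lt_iff.mp (hclose (i+1) hi1k)
      constructor
      · -- G x - F n x < ε : G x ≤ G(p(i+1)), F n x ≥ F n (p i) > G (p i) - ε/2
        linarith [hci.2]
      · -- F n x - G x < ε
        linarith [hci1.1]
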